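/- Let D = A + C = !![0,2;0,0] and let H = x·A + y·B + z·C. Then there exists M ∈ SL(2,ℝ) with M·(−D)·M⁻¹ = H if and only if x² + y² − z² = 0 and z < 0. (The adjoint orbit of −D is the lower half of the cone x² + y² − z² = 0 with the origin removed.) -/

import Mathlib

noncomputable def A : Matrix (Fin 2) (Fin 2) ℝ := !![0, 1; 1, 0]
noncomputable def B : Matrix (Fin 2) (Fin 2) ℝ := !![1, 0; 0, -1]
noncomputable def C : Matrix (Fin 2) (Fin 2) ℝ := !![0, 1; -1, 0]
noncomputable def D : Matrix (Fin 2) (Fin 2) ℝ := A + C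

lemma negD_eq : -D = !![(0:ℝ), -2; 0, 0] := by
  simp [D, A, C]
  norm_num [← Matrix.ext_iff, Fin.forall_fin_two]

lemma H_eq (x y z : ℝ) : x • A + y • B + z • C = !![y, x + z; x - z, -y] := by
  simp [A, B, C]
  norm_num [← Matrix.ext_iff, Fin.forall_fin_two, sub_eq_add_neg]

lemma conj_eq (a b c d : ℝ) (hdet : a * d - b * c = 1) :
    !![a, b; c, d] * (-D) * (!![a, b; c, d])⁻¹ =
      !![2*a*c, -(2*a^2); 2*c^2, -(2*a*c)] := by
  have hinv : (!![a, b; c, d])⁻¹ = !![d, -b; -c, a] := by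
    rw [Matrix.inv_def, Matrix.adjugate_fin_two, Matrix.det_fin_two_of, hdet]
    simp
  rw [hinv, negD_eq]
  norm_num [Matrix.mul_fin_two, ← Matrix.ext_iff, Fin.forall_fin_two]
  ring_nf
  simp

/-- The adjoint orbit of `−D = −(A + C)` under `SL(2,ℝ)` is the lower half
of the cone `x² + y² − z² = 0` (with the origin removed). -/
theorem adjoint_orbit_negD_eq_lower_cone (x y z : ℝ) :
    (∃ M : Matrix (Fin 2) (Fin 2) ℝ, M.det = 1 ∧
        M * (-D) * M⁻¹ = x • A + y • B + z • C) ↔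
      x ^ 2 + y ^ 2 - z ^ 2 = 0 ∧ z < 0 := by
  constructor
  · rintro ⟨M, hdet, hM⟩
    set a := M 0 0 with ha
    set b := M 0 1 with hb
    set c := M 1 0 with hc
    set d := M 1 1 with hd
    have hMeq : M = !![a, b; c, d] := Matrix.eta_fin_two M
    rw [hMeq, Matrix.det_fin_two_of] at hdet
    rw [hMeq, conj_eq a b c d hdet, H_eq] at hM
    have h00 := congrFun (congrFun hM 0) 0
    have h01 := congrFun (congrFun hM 0) 1
    have h10 := congrFun (congrFun hM 1) 0
    simp at h00 h01 h10
    have hx : x = c ^ 2 - a ^ 2 := by linarith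
    have hzv : z = -a ^ 2 - c ^ 2 := by linarith
    constructor
    · rw [hx, hzv, ← h00]; ring
    · nlinarith [h00, h01, h10, sq_nonneg (a*b + c*d), sq_nonneg b, sq_nonneg d, hdet]
  · rintro ⟨h1, hz⟩
    by_cases hxz : x + z = 0
    · -- then y = 0, x = -z > 0; take a = 0, c = √(-z)
      have hy : y = 0 := by nlinarith
      set c : ℝ := Real.sqrt (-z) with hcdef
      have hc2 : c ^ 2 = -z := Real.sq_sqrt (by linarith)
      have hcpos : 0 < c := Real.sqrt_pos.mpr (by linarith)
      refine ⟨!![0, -(1/c); c, 0], ?_, ?_⟩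
      · rw [Matrix.det_fin_two_of]; field_simp; norm_num
      · have hdet : (0:ℝ) * 0 - (-(1/c)) * c = 1 := by field_simp; norm_num
        rw [conj_eq 0 (-(1/c)) c 0 hdet, H_eq]
        funext i
        fin_cases i <;> funext j <;> fin_cases j <;> simp <;> linarith
    · -- x + z < 0
      have hxzlt : x + z < 0 := by
        rcases lt_or_gt_of_ne hxz with h | h
        · exact h
        · nlinarith
      set a : ℝ := Real.sqrt (-(x + z) / 2) with hadef
      have ha2 : a ^ 2 = -(x + z) / 2 := Real.sq_sqrt (by linarith)
      have hapos : 0 < a := Real.sqrt_pos.mpr (by linarith)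
      set c : ℝ := y / (2 * a) with hcdef
      refine ⟨!![a, 0; c, 1/a], ?_, ?_⟩
      · rw [Matrix.det_fin_two_of]; field_simp; norm_num
      · have hdet : a * (1/a) - 0 * c = 1 := by field_simp; norm_num
        rw [conj_eq a 0 c (1/a) hdet, H_eq]
        have hac : 2 * a * c = y := by rw [hcdef]; field_simp
        have ha2' : -(2 * a ^ 2) = x + z := by rw [ha2]; ring
        have hc2 : 2 * c ^ 2 = x - z := by
          rw [hcdef]
          have : a ≠ 0 := ne_of_gt hapos
          field_simp
          try nlinarith
        funext i
        fin_cases i <;> funext j <;> fin_cases j <;> simp <;> linarith
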